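/- arXiv:1705.01364 — 2 statements merged into one kernel-verified Lean document; each statement's English description precedes it below -/
import Mathlib

section
/- Let H be an RKHS on Ω with kernel K, X = {x₁,...,x_N} pairwise distinct, and L a linear operator such that u ↦ Lu(z) is bounded for each z ∈ Ω. Then for every z ∈ Ω and u ∈ H, |Lu(z) − ∑_{k=1}^{N} u(x_k) L h_k(z)| ≤ ‖u‖_H · ‖ε_X‖_H, where ε_X = L_y K(·,z) − ∑_{k=1}^{N} K(·,x_k) L h_k(z) and L_y K(·,z) is the Riesz representer of the functional u ↦ Lu(z). -/
open scoped RealInnerProductSpace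

/-- pointwise error estimate
|Lu(z) − ∑ u(x_k) Lh_k(z)| ≤ ‖u‖ ‖ε_X‖ with ε_X = g − ∑ Lh_k(z) K(·,x_k). -/
theorem pointwise_error_estimate
    {Ω H : Type*} [NormedAddCommGroup H] [InnerProductSpace ℝ H] [CompleteSpace H]
    (toFun : H →ₗ[ℝ] (Ω → ℝ)) (K : Ω → Ω → ℝ) (Kx : Ω → H)
    (hK : ∀ x : Ω, toFun (Kx x) = fun y => K y x)
    (hrepro : ∀ (x : Ω) (f : H), ⟪Kx x, f⟫ = toFun f x)
    {N : ℕ} (x : Fin N → Ω) (hx : Function.Injective x)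
    (h : Fin N → H)
    (hh : ∀ k, h k ∈ Submodule.span ℝ (Set.range fun j => Kx (x j)))
    (hcard : ∀ k j, toFun (h k) (x j) = if k = j then (1 : ℝ) else 0)
    (Lz : H →ₗ[ℝ] ℝ) (g : H) (hg : ∀ u : H, Lz u = ⟪g, u⟫)
    (u : H) :
    |Lz u - ∑ k, toFun u (x k) * Lz (h k)| ≤
      ‖u‖ * ‖g - ∑ k, Lz (h k) • Kx (x k)‖ := by
  have key : Lz u - ∑ k, toFun u (x k) * Lz (h k)
      = ⟪g - ∑ k, Lz (h k) • Kx (x k), u⟫ := by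
    rw [inner_sub_left, sum_inner, hg]
    congr 1
    refine Finset.sum_congr rfl fun k _ => ?_
    rw [real_inner_smul_left, hrepro]
    ring
  rw [key, mul_comm]
  exact (abs_real_inner_le_norm _ _).trans (le_of_eq (mul_comm _ _)) |>.trans
    (le_of_eq (mul_comm _ _))
end

section
/- Let the analytic problem Lu = f be well-posed with constant C, i.e., ‖u‖_W ≤ C‖Lu‖_V for all u ∈ U = H, where ‖·‖_V = max_{z∈Ω}|·| (sup norm) on continuous data over compact Ω. If u* ∈ H is the true solution and u₀ ∈ S_X is its interpolant at X = {x₁,...,x_N}, and u*_N minimizes ‖Lu_N − f‖_V over u_N ∈ S_X, then ‖u* − u*_N‖_W ≤ C ‖u*‖_H ‖ε_X‖_H, where ‖ε_X‖_H is the worst-case interpolation error norm from the pointwise error estimate. -/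
open scoped RealInnerProductSpace

/-- for a well-posed problem Lu = f, the residual-minimizing approximation
u*_N ∈ S_X satisfies ‖u* − u*_N‖_W ≤ C ‖u*‖_H ‖ε_X‖_H. -/
theorem wellposed_error_bound
    {Ω H : Type*} [Nonempty Ω] [NormedAddCommGroup H] [InnerProductSpace ℝ H]
    [CompleteSpace H]
    (toFun : H →ₗ[ℝ] (Ω → ℝ)) (K : Ω → Ω → ℝ) (Kx : Ω → H)
    (hK : ∀ x : Ω, toFun (Kx x) = fun y => K y x)
    (hrepro : ∀ (x : Ω) (f : H), ⟪Kx x, f⟫ = toFun f x)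
    {N : ℕ} (x : Fin N → Ω) (hx : Function.Injective x)
    (h : Fin N → H)
    (hh : ∀ k, h k ∈ Submodule.span ℝ (Set.range fun j => Kx (x j)))
    (hcard : ∀ k j, toFun (h k) (x j) = if k = j then (1 : ℝ) else 0)
    (L : H →ₗ[ℝ] (Ω → ℝ)) (g : Ω → H)
    (hg : ∀ (z : Ω) (u : H), L u z = ⟪g z, u⟫)
    (nW : Seminorm ℝ H) (C : ℝ) (hC : 0 ≤ C)
    (hwp : ∀ u : H, nW u ≤ C * ⨆ z, |L u z|)
    (ustar uN : H)
    (huN : uN ∈ Submodule.span ℝ (Set.range fun k => Kx (x k)))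
    (hmin : ∀ s ∈ Submodule.span ℝ (Set.range fun k => Kx (x k)),
      (⨆ z, |L uN z - L ustar z|) ≤ ⨆ z, |L s z - L ustar z|)
    (εX : ℝ) (hε : εX = ⨆ z, ‖g z - ∑ k, L (h k) z • Kx (x k)‖) :
    nW (ustar - uN) ≤ C * ‖ustar‖ * εX := by
  classical
  set e : Ω → H := fun z => ∑ k, L (h k) z • Kx (x k) with he
  set u₀ : H := ∑ k, toFun ustar (x k) • h k with hu₀
  have hu₀S : u₀ ∈ Submodule.span ℝ (Set.range fun k => Kx (x k)) :=
    Submodule.sum_mem _ fun k _ => Submodule.smul_mem _ _ (hh k)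
  have hkey : ∀ z, L u₀ z - L ustar z = ⟪e z - g z, ustar⟫ := by
    intro z
    rw [inner_sub_left]
    have h1 : (⟪e z, ustar⟫ : ℝ) = ∑ k, L (h k) z * toFun ustar (x k) := by
      rw [he]
      rw [sum_inner]
      refine Finset.sum_congr rfl fun k _ => ?_
      rw [real_inner_smul_left, hrepro]
    have h2 : L u₀ z = ∑ k, L (h k) z * toFun ustar (x k) := by
      rw [hu₀, map_sum]
      rw [Finset.sum_apply]
      refine Finset.sum_congr rfl fun k _ => ?_
      rw [map_smul]
      simp [mul_comm]
    rw [h1, h2, hg z ustar]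
  have hCS : ∀ z, |L u₀ z - L ustar z| ≤ ‖ustar‖ * ‖g z - e z‖ := by
    intro z
    rw [hkey z]
    calc |⟪e z - g z, ustar⟫| ≤ ‖e z - g z‖ * ‖ustar‖ := abs_real_inner_le_norm _ _
      _ = ‖ustar‖ * ‖g z - e z‖ := by rw [norm_sub_rev]; ring
  by_cases hb : BddAbove (Set.range fun z => ‖g z - e z‖)
  · -- main case
    have hεb : ∀ z, ‖g z - e z‖ ≤ εX := by
      intro z; rw [hε]; exact le_ciSup hb z
    have h3 : (⨆ z, |L u₀ z - L ustar z|) ≤ ‖ustar‖ * εX := by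
      apply ciSup_le
      intro z
      exact (hCS z).trans (mul_le_mul_of_nonneg_left (hεb z) (norm_nonneg _))
    have h4 : (⨆ z, |L (ustar - uN) z|) = ⨆ z, |L uN z - L ustar z| := by
      congr 1; funext z; rw [map_sub]; simp [abs_sub_comm]
    calc nW (ustar - uN) ≤ C * ⨆ z, |L (ustar - uN) z| := hwp _
      _ = C * ⨆ z, |L uN z - L ustar z| := by rw [h4]
      _ ≤ C * ⨆ z, |L u₀ z - L ustar z| := mul_le_mul_of_nonneg_left (hmin u₀ hu₀S) hC
      _ ≤ C * (‖ustar‖ * εX) := mul_le_mul_of_nonneg_left h3 hC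
      _ = C * ‖ustar‖ * εX := (mul_assoc _ _ _).symm
  · -- degenerate case: the error functional is unbounded in norm
    have hε0 : εX = 0 := by rw [hε]; exact Real.iSup_of_not_bddAbove hb
    -- then ‖g z‖ is unbounded
    set M : ℝ := ∑ k, ‖h k‖ * ‖Kx (x k)‖ with hM
    have hgz : ¬ BddAbove (Set.range fun z => ‖g z‖) := by
      intro hcon
      obtain ⟨B, hB⟩ := hcon
      apply hb
      refine ⟨(1 + M) * B, ?_⟩
      rintro _ ⟨z, rfl⟩
      have hgB : ‖g z‖ ≤ B := hB (Set.mem_range_self z)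
      have hez : ‖e z‖ ≤ M * ‖g z‖ := by
        calc ‖e z‖ ≤ ∑ k, ‖L (h k) z • Kx (x k)‖ := norm_sum_le _ _
          _ ≤ ∑ k, (‖h k‖ * ‖Kx (x k)‖) * ‖g z‖ := by
              refine Finset.sum_le_sum fun k _ => ?_
              rw [norm_smul]
              have : ‖L (h k) z‖ ≤ ‖g z‖ * ‖h k‖ := by
                rw [hg z (h k), Real.norm_eq_abs]
                exact abs_real_inner_le_norm _ _
              calc ‖L (h k) z‖ * ‖Kx (x k)‖ ≤ (‖g z‖ * ‖h k‖) * ‖Kx (x k)‖ :=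
                    mul_le_mul_of_nonneg_right this (norm_nonneg _)
                _ = (‖h k‖ * ‖Kx (x k)‖) * ‖g z‖ := by ring
          _ = M * ‖g z‖ := by rw [hM, ← Finset.sum_mul]
      have hM0 : 0 ≤ M := Finset.sum_nonneg fun k _ =>
        mul_nonneg (norm_nonneg _) (norm_nonneg _)
      calc ‖g z - e z‖ ≤ ‖g z‖ + ‖e z‖ := norm_sub_le _ _
        _ ≤ ‖g z‖ + M * ‖g z‖ := by linarith
        _ = (1 + M) * ‖g z‖ := by ring
        _ ≤ (1 + M) * B := mul_le_mul_of_nonneg_left hgB (by linarith)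
    -- Banach–Steinhaus: some u has unbounded data
    have hBS : ∃ u : H, ¬ BddAbove (Set.range fun z => |(⟪g z, u⟫ : ℝ)|) := by
      by_contra hcon
      push_neg at hcon
      have hbs := banach_steinhaus (g := fun z : Ω => innerSL ℝ (g z)) (fun u => ?_)
      · obtain ⟨C', hC'⟩ := hbs
        apply hgz
        refine ⟨C', ?_⟩
        rintro _ ⟨z, rfl⟩
        have := hC' z
        simpa using this
      · obtain ⟨B, hB⟩ := hcon u
        refine ⟨B, fun z => ?_⟩
        have := hB (Set.mem_range_self z)
        simpa using this
    obtain ⟨u, hu⟩ := hBS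
    set v : H := ustar - uN with hv
    have hnWu : (0 : ℝ) ≤ nW u := apply_nonneg nW u
    have key : ∀ t : ℝ, 0 < t → nW v ≤ t * nW u := by
      intro t ht
      by_cases hvB : BddAbove (Set.range fun z => |L v z|)
      · obtain ⟨B, hB⟩ := hvB
        have hvu : ¬ BddAbove (Set.range fun z => |L (v + t • u) z|) := by
          intro hcon
          obtain ⟨D, hD⟩ := hcon
          apply hu
          refine ⟨(D + B) / t, ?_⟩
          rintro _ ⟨z, rfl⟩
          have h1 : |L v z| ≤ B := hB (Set.mem_range_self z)
          have h2 : |L (v + t • u) z| ≤ D := hD (Set.mem_range_self z)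
          have h3 : L (v + t • u) z = L v z + t * (⟪g z, u⟫ : ℝ) := by
            rw [map_add, map_smul]
            simp [hg z u]
          have h4 : t * |(⟪g z, u⟫ : ℝ)| = |t * (⟪g z, u⟫ : ℝ)| := by
            rw [abs_mul, abs_of_pos ht]
          have h5 : |t * (⟪g z, u⟫ : ℝ)| ≤ D + B := by
            have : t * (⟪g z, u⟫ : ℝ) = L (v + t • u) z - L v z := by rw [h3]; ring
            rw [this]
            calc |L (v + t • u) z - L v z| ≤ |L (v + t • u) z| + |L v z| := abs_sub _ _
              _ ≤ D + B := add_le_add h2 h1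
          show |(⟪g z, u⟫ : ℝ)| ≤ (D + B) / t
          rw [le_div_iff₀ ht, mul_comm, h4]
          exact h5
        have h5 : nW (v + t • u) ≤ 0 := by
          have := hwp (v + t • u)
          rw [Real.iSup_of_not_bddAbove hvu, mul_zero] at this
          exact this
        have h6 : nW (t • u) = t * nW u := by
          rw [map_smul_eq_mul, Real.norm_eq_abs, abs_of_pos ht]
        calc nW v = nW ((v + t • u) - t • u) := by congr 1; abel
          _ ≤ nW (v + t • u) + nW (t • u) := map_sub_le_add nW _ _
          _ ≤ 0 + t * nW u := by rw [h6]; exact add_le_add h5 le_rfl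
          _ = t * nW u := zero_add _
      · have h7 := hwp v
        rw [Real.iSup_of_not_bddAbove hvB, mul_zero] at h7
        exact h7.trans (by positivity)
    have hv0 : nW v ≤ 0 := by
      by_contra hpos
      push_neg at hpos
      have ht : 0 < nW v / (nW u + 1) := div_pos hpos (by linarith)
      have := key _ ht
      rw [div_mul_eq_mul_div] at this
      have h8 : nW v * nW u / (nW u + 1) < nW v := by
        rw [div_lt_iff₀ (by linarith)]
        nlinarith
      linarith
    calc nW (ustar - uN) ≤ 0 := hv0
      _ = C * ‖ustar‖ * εX := by rw [hε0, mul_zero]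
end
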